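/- If a connected simple graph G contains a cycle, then for every positive weight function μ on V_G, sup_{v ∈ V_G} μ(B(v,1))/μ(v) ≥ 3; hence C_G^0 ≥ 3. -/

import Mathlib

private lemma getVert_eq_support_getElem' {V : Type*} {G : SimpleGraph V} {u v : V}
    (p : G.Walk u v) {i : ℕ} (hi : i ≤ p.length) :
    p.getVert i = p.support[i]'(by simp [SimpleGraph.Walk.length_support]; omega) := by
  induction p generalizing i with
  | nil => simp [SimpleGraph.Walk.getVert]
  | cons h q ih =>
    cases i with
    | zero => simp
    | succ n =>
      simp only [SimpleGraph.Walk.getVert_cons_succ, SimpleGraph.Walk.support_cons]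
      rw [ih (by simpa using hi)]
      simp

/-- if a connected (locally finite) graph contains a cycle, then for every
positive weight function μ, `sup_v μ(B(v,1))/μ(v) ≥ 3` (i.e. every upper bound `C` of
the ratios satisfies `C ≥ 3`); hence `C_G^0 ≥ 3`. -/
theorem stmt_8 {V : Type*} (G : SimpleGraph V) [inst : ∀ v : V, Fintype (G.neighborSet v)]
    (hG : G.Connected) (hcyc : ∃ (v : V) (c : G.Walk v v), c.IsCycle)
    (μ : V → ℝ) (hμ : ∀ v, 0 < μ v) :
    ∀ C : ℝ, (∀ v : V, (μ v + ∑ w ∈ G.neighborFinset v, μ w) / μ v ≤ C) → 3 ≤ C := by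
  intro C hC
  classical
  obtain ⟨v, c, hc⟩ := hcyc
  -- pick u minimizing μ over the support of the cycle
  obtain ⟨u, huS, humin⟩ := Finset.exists_min_image c.support.toFinset μ
    ⟨v, by simp [c.start_mem_support]⟩
  have huc : u ∈ c.support := by simpa using huS
  -- rotate the cycle to start at u
  set c' := c.rotate u huc with hc'def
  have hc' : c'.IsCycle := hc.rotate huc
  -- membership transfer from c' to c
  have hmem : ∀ x, x ∈ c'.support → x ∈ c.support := by
    intro x hx
    rw [c'.support_eq_cons] at hx
    rcases List.mem_cons.mp hx with h | h
    · exact h ▸ huc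
    · have := (c.support_rotate u huc).mem_iff.mp h
      rw [c.support_eq_cons]
      exact List.mem_cons_of_mem _ this
  have hmin : ∀ x, x ∈ c'.support → μ u ≤ μ x := by
    intro x hx
    exact humin x (by simpa using hmem x hx)
  set n := c'.length with hn
  have hn3 : 3 ≤ n := hc'.three_le_length
  set w1 := c'.getVert 1 with hw1
  set w2 := c'.getVert (n - 1) with hw2
  have hadj1 : G.Adj u w1 := by
    have := c'.adj_getVert_succ (i := 0) (by omega)
    simpa using this
  have hadj2 : G.Adj u w2 := by
    have h2 := c'.adj_getVert_succ (i := n - 1) (by omega)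
    rw [show n - 1 + 1 = n by omega, hn, c'.getVert_length] at h2
    exact h2.symm
  -- distinctness via nodup of the support tail
  have hlen_sup : c'.support.length = n + 1 := by
    simp [SimpleGraph.Walk.length_support, hn]
  have hne : w1 ≠ w2 := by
    intro h
    have h1 : w1 = c'.support[1]'(by omega) :=
      getVert_eq_support_getElem' c' (by omega)
    have h2 : w2 = c'.support[n - 1]'(by omega) :=
      getVert_eq_support_getElem' c' (by omega)
    have htail : c'.support.tail.Nodup := hc'.support_nodup
    have ht1 : c'.support.tail[0]'(by simp [List.length_tail]; omega) =
        c'.support[1]'(by omega) := by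
      rw [List.getElem_tail]
    have ht2 : c'.support.tail[n - 2]'(by simp [List.length_tail]; omega) =
        c'.support[n - 1]'(by omega) := by
      rw [List.getElem_tail]
      congr 1
      omega
    have hlt : n - 2 < c'.support.tail.length := by
      simp [List.length_tail, hlen_sup]; omega
    have h0 : (0 : ℕ) < c'.support.tail.length := by
      simp [List.length_tail, hlen_sup]; omega
    have heq : c'.support.tail[0]'h0 = c'.support.tail[n - 2]'hlt := by
      rw [ht1, ht2, ← h1, ← h2, h]
    have := (htail.getElem_inj_iff (hi := h0) (hj := hlt)).mp heq
    omega
  -- neighbor sum bound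
  have hsub : ({w1, w2} : Finset V) ⊆ G.neighborFinset u := by
    intro x hx
    rcases Finset.mem_insert.mp hx with h | h
    · simpa [h] using (G.mem_neighborFinset u w1).mpr hadj1
    · have := Finset.mem_singleton.mp h
      simpa [this] using (G.mem_neighborFinset u w2).mpr hadj2
  have hw1mem : w1 ∈ c'.support := by
    rw [SimpleGraph.Walk.mem_support_iff_exists_getVert]
    exact ⟨1, rfl, by omega⟩
  have hw2mem : w2 ∈ c'.support := by
    rw [SimpleGraph.Walk.mem_support_iff_exists_getVert]
    exact ⟨n - 1, rfl, by omega⟩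
  have hsum : 2 * μ u ≤ ∑ w ∈ G.neighborFinset u, μ w := by
    have h1 : ∑ w ∈ ({w1, w2} : Finset V), μ w = μ w1 + μ w2 := by
      rw [Finset.sum_insert (by simpa using hne), Finset.sum_singleton]
    have h2 : ∑ w ∈ ({w1, w2} : Finset V), μ w ≤ ∑ w ∈ G.neighborFinset u, μ w :=
      Finset.sum_le_sum_of_subset_of_nonneg hsub (fun x _ _ => (hμ x).le)
    have := hmin w1 hw1mem
    have := hmin w2 hw2mem
    linarith
  have hCu := hC u
  have hpos := hμ u
  rw [div_le_iff₀ hpos] at hCu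
  nlinarith [hμ u]
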